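/- Let n ≥ k ≥ 2, let 𝔽 be a field and let S_k ⊆ C([n],k). Then the k-hyperclique complex ⟨S_k⟩ is D-perfect if and only if the simplicial matroid Sim_k^n(S_k) is superdense. -/

import Mathlib

/-!
Common definitions for simplicial matroids, following Cordovil–Lemos–Linhares Sales,
"Dirac's theorem on simplicial matroids".

We model `[n] = {1,…,n}` by `Fin n`, and a subset of `[n]` by a `Finset (Fin n)`.
A family `S_k ⊆ C([n],k)` is a `Finset (Finset (Fin n))` (all of whose members
have cardinality `k`, which is imposed by hypotheses in the theorems).
-/

open Finset

/-- The incidence number `[F' : F]`: if `F = i₁ < i₂ < ⋯ < iₘ` and `F' = F \ {iⱼ}`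
then `[F' : F] = (-1)ʲ` (with `j` the 1-based position of the deleted element),
and `[F' : F] = 0` otherwise. -/
def inc {n : ℕ} (F' F : Finset (Fin n)) : ℤ :=
  ∑ i ∈ F, if F' = F.erase i then (-1 : ℤ) ^ (F.filter (fun j => j ≤ i)).card else 0

/-- The family `C([n], m)` of `m`-element subsets of `[n]`, as a type. -/
abbrev Csets (n m : ℕ) := {F : Finset (Fin n) // F.card = m}

/-- `∂_k F`, the boundary of a single `k`-subset `F` of `[n]`,
as a vector of `𝔽^{C([n],k-1)}`. -/
def bvec (𝔽 : Type*) [Field 𝔽] (n k : ℕ) (F : Finset (Fin n)) : Csets n (k - 1) → 𝔽 :=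
  fun F' => ((inc F'.1 F : ℤ) : 𝔽)

/-- Independence in the simplicial matroid `Sim_k^n(S_k)` over `𝔽`:
`X ⊆ S_k` is independent iff the vectors `∂_k F`, `F ∈ X`, are linearly independent. -/
def SimIndep (𝔽 : Type*) [Field 𝔽] (n k : ℕ) (Sk X : Finset (Finset (Fin n))) : Prop :=
  X ⊆ Sk ∧ LinearIndependent 𝔽 (fun F : X => bvec 𝔽 n k F.1)

/-- A circuit of `Sim_k^n(S_k)`: a minimal dependent subset of the ground set. -/
def SimCircuit (𝔽 : Type*) [Field 𝔽] (n k : ℕ) (Sk C : Finset (Finset (Fin n))) : Prop :=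
  C ⊆ Sk ∧ ¬ LinearIndependent 𝔽 (fun F : C => bvec 𝔽 n k F.1) ∧
    ∀ C' ⊂ C, LinearIndependent 𝔽 (fun F : C' => bvec 𝔽 n k F.1)

/-- The rank (in `Sim_k^n`) of a set `X` of `k`-subsets of `[n]`:
the dimension of the span of the boundaries of its members. -/
noncomputable def simRank (𝔽 : Type*) [Field 𝔽] (n k : ℕ) (X : Finset (Finset (Fin n))) : ℕ :=
  Module.finrank 𝔽 (Submodule.span 𝔽 ((fun F => bvec 𝔽 n k F) '' (X : Set (Finset (Fin n)))))

/-- A cocircuit of `Sim_k^n(S_k)`, i.e. a circuit of the dual matroid: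
a minimal set `C ⊆ S_k` whose complement does not span (`X` is independent in the dual
matroid iff `r(E ∖ X) = r(E)`). -/
def SimCocircuit (𝔽 : Type*) [Field 𝔽] (n k : ℕ) (Sk C : Finset (Finset (Fin n))) : Prop :=
  C ⊆ Sk ∧ simRank 𝔽 n k (Sk \ C) < simRank 𝔽 n k Sk ∧
    ∀ C' ⊂ C, simRank 𝔽 n k (Sk \ C') = simRank 𝔽 n k Sk

/-- The boundary map `∂_k : 𝔽^{S_k} → 𝔽^{C([n],k-1)}`. -/
noncomputable def bdryMap (𝔽 : Type*) [Field 𝔽] (n k : ℕ) (Sk : Finset (Finset (Fin n))) :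
    (↥Sk → 𝔽) →ₗ[𝔽] (Csets n (k - 1) → 𝔽) :=
  Matrix.mulVecLin (Matrix.of fun (F' : Csets n (k - 1)) (F : ↥Sk) => ((inc F'.1 F.1 : ℤ) : 𝔽))

/-- The coboundary `δ^{k-1} V` of a `(k-1)`-subset `V` of `[n]`,
as a vector of `𝔽^{S_k}`; its `F`-coordinate is `[V : F]`. -/
def cobdry (𝔽 : Type*) [Field 𝔽] {n : ℕ} (Sk : Finset (Finset (Fin n)))
    (V : Finset (Fin n)) : ↥Sk → 𝔽 :=
  fun F => ((inc V F.1 : ℤ) : 𝔽)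

/-- The boundary `∂_{k+1} X` of a `(k+1)`-subset `X` of `[n]`, regarded as a vector
of `𝔽^{S_k}`; its `F`-coordinate is `[F : X]`. -/
def pbdry (𝔽 : Type*) [Field 𝔽] {n : ℕ} (Sk : Finset (Finset (Fin n)))
    (X : Finset (Fin n)) : ↥Sk → 𝔽 :=
  fun F => ((inc F.1 X : ℤ) : 𝔽)

open scoped Classical in
/-- The support of a vector of `𝔽^{S_k}`, as a set of `k`-subsets of `[n]`. -/
noncomputable def suppFin {𝔽 : Type*} [Field 𝔽] {n : ℕ} {Sk : Finset (Finset (Fin n))}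
    (v : ↥Sk → 𝔽) : Finset (Finset (Fin n)) :=
  (Sk.attach.filter fun F => v F ≠ 0).image Subtype.val

/-- `supp(δ^{k-1} V) ⊆ S_k`. -/
noncomputable def suppδ (𝔽 : Type*) [Field 𝔽] {n : ℕ} (Sk : Finset (Finset (Fin n)))
    (V : Finset (Fin n)) : Finset (Finset (Fin n)) :=
  suppFin (cobdry 𝔽 Sk V)

/-- The cocircuit space of `Sim_k^n(S_k)`: the orthogonal complement, with respect to the
standard bilinear form on `𝔽^{S_k}`, of the circuit space `ker ∂_k`. -/
noncomputable def cocircSpace (𝔽 : Type*) [Field 𝔽] (n k : ℕ) (Sk : Finset (Finset (Fin n))) :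
    Submodule 𝔽 (↥Sk → 𝔽) where
  carrier := {w | ∀ v ∈ LinearMap.ker (bdryMap 𝔽 n k Sk), ∑ F, v F * w F = 0}
  zero_mem' := by intro v hv; simp
  add_mem' := by
    intro a b ha hb v hv
    have h1 := ha v hv
    have h2 := hb v hv
    simp only [Pi.add_apply, mul_add, Finset.sum_add_distrib]
    rw [h1, h2, add_zero]
  smul_mem' := by
    intro c w hw v hv
    have h := hw v hv
    simp only [Pi.smul_apply, smul_eq_mul]
    calc ∑ F, v F * (c * w F) = ∑ F, c * (v F * w F) := by
          exact Finset.sum_congr rfl fun F _ => by ring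
      _ = c * ∑ F, v F * w F := (Finset.mul_sum _ _ _).symm
      _ = 0 := by rw [h, mul_zero]

/-- The faces of the `k`-hyperclique complex `⟨S_k⟩`: all `F ⊆ [n]` with `|F| < k`,
together with all `F` every `k`-element subset of which lies in `S_k`. -/
def IsFace {n : ℕ} (k : ℕ) (Sk : Finset (Finset (Fin n))) (F : Finset (Fin n)) : Prop :=
  F.card < k ∨ ∀ G ⊆ F, G.card = k → G ∈ Sk

/-- A facet of `⟨S_k⟩`: an inclusion-maximal face. -/
def IsFacet {n : ℕ} (k : ℕ) (Sk : Finset (Finset (Fin n))) (F : Finset (Fin n)) : Prop :=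
  IsFace k Sk F ∧ ∀ G, IsFace k Sk G → F ⊆ G → F = G

/-- `V` is simplicial in `⟨S_k⟩` if there is exactly one facet `X` of `⟨S_k⟩`
with `V ⊊ X`. -/
def SimplicialFace {n : ℕ} (k : ℕ) (Sk : Finset (Finset (Fin n))) (V : Finset (Fin n)) : Prop :=
  ∃! X, IsFacet k Sk X ∧ V ⊂ X

/-- The `k`-skeleta of the complexes `Δ_0 = ⟨S_k⟩`, `Δ_{j+1} = Δ_j ∖∖ V_j`, where
`Δ ∖∖ V = ⟨(skeleton of Δ) ∖ supp(δ^{k-1} V)⟩` (0-indexed). -/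
noncomputable def delSeq (𝔽 : Type*) [Field 𝔽] {n : ℕ} (Sk : Finset (Finset (Fin n)))
    (V : ℕ → Finset (Fin n)) : ℕ → Finset (Finset (Fin n))
  | 0 => Sk
  | j + 1 => delSeq 𝔽 Sk V j \ suppδ 𝔽 (delSeq 𝔽 Sk V j) (V j)

/-- `C*_j := supp(δ^{k-1} V_j) ∖ ⋃_{i<j} supp(δ^{k-1} V_i)` (0-indexed). -/
noncomputable def Cstar (𝔽 : Type*) [Field 𝔽] {n : ℕ} (Sk : Finset (Finset (Fin n)))
    (V : ℕ → Finset (Fin n)) (j : ℕ) : Finset (Finset (Fin n)) :=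
  suppδ 𝔽 Sk (V j) \ (Finset.range j).biUnion (fun i => suppδ 𝔽 Sk (V i))

/-- `(V_1,…,V_r)` (0-indexed: `V 0, …, V (r-1)`) is a basic linear sequence for `⟨S_k⟩`,
where `r` is the rank of `Sim_k^n(S_k)`: each `V_j` is a `(k-1)`-subset of `[n]` and each
`C*_j` is a cocircuit of `Sim_k^n(S_k(Δ_{j-1}))`. -/
def BasicLinearSeq (𝔽 : Type*) [Field 𝔽] (n k : ℕ) (Sk : Finset (Finset (Fin n))) (r : ℕ)
    (V : ℕ → Finset (Fin n)) : Prop :=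
  simRank 𝔽 n k Sk = r ∧ (∀ j < r, (V j).card = k - 1) ∧
    ∀ j < r, SimCocircuit 𝔽 n k (delSeq 𝔽 Sk V j) (Cstar 𝔽 Sk V j)

/-- `⟨S_k⟩` is D-perfect: there is a basic linear sequence `V_1,…,V_r` such that each `V_j`
is simplicial in `Δ_{j-1}`. -/
def DPerfect (𝔽 : Type*) [Field 𝔽] (n k : ℕ) (Sk : Finset (Finset (Fin n))) : Prop :=
  ∃ V : ℕ → Finset (Fin n),
    BasicLinearSeq 𝔽 n k Sk (simRank 𝔽 n k Sk) V ∧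
      ∀ j < simRank 𝔽 n k Sk, SimplicialFace k (delSeq 𝔽 Sk V j) (V j)

/-- A flat of `Sim_k^n(S_k)`: a closed subset of the ground set. -/
def SimFlat (𝔽 : Type*) [Field 𝔽] (n k : ℕ) (Sk X : Finset (Finset (Fin n))) : Prop :=
  X ⊆ Sk ∧ ∀ F ∈ Sk,
    bvec 𝔽 n k F ∈ Submodule.span 𝔽 ((fun G => bvec 𝔽 n k G) '' (X : Set (Finset (Fin n)))) →
      F ∈ X

/-- A hyperplane of `Sim_k^n(S_k)`: a flat of rank one less than the rank of the matroid. -/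
def SimHyperplane (𝔽 : Type*) [Field 𝔽] (n k : ℕ) (Sk H : Finset (Finset (Fin n))) : Prop :=
  SimFlat 𝔽 n k Sk H ∧ simRank 𝔽 n k H + 1 = simRank 𝔽 n k Sk

/-- A modular flat of `Sim_k^n(S_k)`:
`r(X) + r(Y) = r(X ∪ Y) + r(X ∩ Y)` for every flat `Y`. -/
def ModularFlat (𝔽 : Type*) [Field 𝔽] (n k : ℕ) (Sk X : Finset (Finset (Fin n))) : Prop :=
  SimFlat 𝔽 n k Sk X ∧ ∀ Y, SimFlat 𝔽 n k Sk Y →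
    simRank 𝔽 n k X + simRank 𝔽 n k Y = simRank 𝔽 n k (X ∪ Y) + simRank 𝔽 n k (X ∩ Y)

open scoped Classical in
/-- The closure of `X` in `Sim_k^n(S_k)`. -/
noncomputable def simClosure (𝔽 : Type*) [Field 𝔽] (n k : ℕ)
    (Sk X : Finset (Finset (Fin n))) : Finset (Finset (Fin n)) :=
  Sk.filter fun F =>
    bvec 𝔽 n k F ∈ Submodule.span 𝔽 ((fun G => bvec 𝔽 n k G) '' (X : Set (Finset (Fin n))))

/-- `Sim_k^n(S_k)` is supersolvable: it admits a maximal chain of modular flats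
`cl(∅) = X_0 ⊊ X_1 ⊊ ⋯ ⊊ X_r = S_k`, `r` the rank. -/
def Supersolvable (𝔽 : Type*) [Field 𝔽] (n k : ℕ) (Sk : Finset (Finset (Fin n))) : Prop :=
  ∃ X : ℕ → Finset (Finset (Fin n)),
    X 0 = simClosure 𝔽 n k Sk ∅ ∧ X (simRank 𝔽 n k Sk) = Sk ∧
      (∀ i < simRank 𝔽 n k Sk, X i ⊂ X (i + 1)) ∧
      ∀ i ≤ simRank 𝔽 n k Sk, ModularFlat 𝔽 n k Sk (X i)

/-- `H` is a dense hyperplane of `Sim_k^n(ground)`: a hyperplane of the form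
`ground ∖ supp(δ^{k-1} V)` for some `(k-1)`-subset `V` simplicial in `⟨ground⟩`. -/
def DenseHyp (𝔽 : Type*) [Field 𝔽] (n k : ℕ) (ground H : Finset (Finset (Fin n))) : Prop :=
  SimHyperplane 𝔽 n k ground H ∧
    ∃ V : Finset (Fin n), V.card = k - 1 ∧ SimplicialFace k ground V ∧
      H = ground \ suppδ 𝔽 ground V

/-- `Sim_k^n(S_k)` is superdense: there is a chain `∅ = X_0 ⊊ X_1 ⊊ ⋯ ⊊ X_r = S_k` of flats
(`r` the rank) with each `X_i` a dense hyperplane of `Sim_k^n(X_{i+1})`. -/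
def Superdense (𝔽 : Type*) [Field 𝔽] (n k : ℕ) (Sk : Finset (Finset (Fin n))) : Prop :=
  ∃ X : ℕ → Finset (Finset (Fin n)),
    X 0 = ∅ ∧ X (simRank 𝔽 n k Sk) = Sk ∧
      (∀ i ≤ simRank 𝔽 n k Sk, SimFlat 𝔽 n k Sk (X i)) ∧
      (∀ i < simRank 𝔽 n k Sk, X i ⊂ X (i + 1)) ∧
      ∀ i < simRank 𝔽 n k Sk, DenseHyp 𝔽 n k (X (i + 1)) (X i)

/-- `Sim_k^n(S_k)` is triangulable over `𝔽`: the boundaries of the `(k+1)`-faces of `⟨S_k⟩`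
span the circuit space `ker ∂_k`. -/
def Triangulable (𝔽 : Type*) [Field 𝔽] (n k : ℕ) (Sk : Finset (Finset (Fin n))) : Prop :=
  Submodule.span 𝔽
      {v : ↥Sk → 𝔽 | ∃ X : Finset (Fin n), X.card = k + 1 ∧ IsFace k Sk X ∧ v = pbdry 𝔽 Sk X}
    = LinearMap.ker (bdryMap 𝔽 n k Sk)

/-- `Sim_k^n(S_k)` is strongly triangulable over `𝔽`: there are `(k+1)`-faces `X_1,…,X_{m'}`
of `⟨S_k⟩` whose boundaries span `ker ∂_k` and such that every circuit `C` has a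
representing vector `C⃗` with support `C` which is a combination, with nonzero coefficients,
of boundaries `∂_{k+1} X_{i_j}` with `⋃_{F ∈ C} F = ⋃_j X_{i_j}`. -/
def StronglyTriangulable (𝔽 : Type*) [Field 𝔽] (n k : ℕ)
    (Sk : Finset (Finset (Fin n))) : Prop :=
  ∃ (m' : ℕ) (Xs : Fin m' → Finset (Fin n)),
    (∀ i, (Xs i).card = k + 1 ∧ IsFace k Sk (Xs i)) ∧
    Submodule.span 𝔽 (Set.range fun i => pbdry 𝔽 Sk (Xs i)) = LinearMap.ker (bdryMap 𝔽 n k Sk) ∧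
    ∀ C, SimCircuit 𝔽 n k Sk C →
      ∃ (s : ℕ) (idx : Fin s → Fin m') (a : Fin s → 𝔽) (Cv : ↥Sk → 𝔽),
        (∀ j, a j ≠ 0) ∧ suppFin Cv = C ∧
        Cv = ∑ j, a j • pbdry 𝔽 Sk (Xs (idx j)) ∧
        C.biUnion id = Finset.univ.biUnion fun j : Fin s => Xs (idx j)

/-- The simple graph `([n], S_2)`. -/
def graphOf {n : ℕ} (S2 : Finset (Finset (Fin n))) : SimpleGraph (Fin n) where
  Adj u v := u ≠ v ∧ ({u, v} : Finset (Fin n)) ∈ S2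
  symm := by
    refine ⟨fun u v h => ?_⟩
    exact ⟨h.1.symm, by rw [Finset.pair_comm]; exact h.2⟩
  loopless := by refine ⟨fun u h => ?_⟩; exact h.1 rfl

/-- A simple graph is chordal if every cycle of length at least four has a chord, i.e. an
edge of the graph joining two non-consecutive vertices of the cycle. -/
def Chordal {α : Type*} (G : SimpleGraph α) : Prop :=
  ∀ (v : α) (w : G.Walk v v), w.IsCycle → 4 ≤ w.length →
    ∃ u₁ u₂, u₁ ∈ w.support ∧ u₂ ∈ w.support ∧ G.Adj u₁ u₂ ∧ s(u₁, u₂) ∉ w.edges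

/-! ### Auxiliary lemmas for stmt10 -/

section StmtAux

variable (𝔽 : Type*) [Field 𝔽] {n k : ℕ}

lemma mem_suppδ_iff {Sk : Finset (Finset (Fin n))} {V F : Finset (Fin n)} :
    F ∈ suppδ 𝔽 Sk V ↔ F ∈ Sk ∧ ((inc V F : ℤ) : 𝔽) ≠ 0 := by
  classical
  simp only [suppδ, suppFin, cobdry, Finset.mem_image, Finset.mem_filter, Finset.mem_attach,
    true_and, Subtype.exists, exists_and_right, exists_eq_right]
  constructor
  · rintro ⟨hF, h⟩; exact ⟨hF, (Finset.mem_filter.1 h).2⟩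
  · rintro ⟨hF, h⟩; exact ⟨hF, Finset.mem_filter.2 ⟨Finset.mem_attach _ _, h⟩⟩

lemma suppδ_subset {Sk : Finset (Finset (Fin n))} {V : Finset (Fin n)} :
    suppδ 𝔽 Sk V ⊆ Sk := fun F hF => ((mem_suppδ_iff 𝔽).1 hF).1

lemma suppδ_of_subset {Sk Δ : Finset (Finset (Fin n))} (h : Δ ⊆ Sk) (V : Finset (Fin n)) :
    suppδ 𝔽 Δ V = Δ ∩ suppδ 𝔽 Sk V := by
  ext F
  simp only [mem_suppδ_iff, Finset.mem_inter]
  constructor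
  · rintro ⟨h1, h2⟩; exact ⟨h1, h h1, h2⟩
  · rintro ⟨h1, _, h2⟩; exact ⟨h1, h2⟩

lemma delSeq_subset (Sk : Finset (Finset (Fin n))) (V : ℕ → Finset (Fin n)) :
    ∀ j, delSeq 𝔽 Sk V j ⊆ Sk := by
  intro j
  induction j with
  | zero => exact fun F hF => hF
  | succ j ih => exact fun F hF => ih (Finset.mem_sdiff.1 hF).1

lemma delSeq_eq (Sk : Finset (Finset (Fin n))) (V : ℕ → Finset (Fin n)) (j : ℕ) :
    delSeq 𝔽 Sk V j = Sk \ (Finset.range j).biUnion (fun i => suppδ 𝔽 Sk (V i)) := by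
  induction j with
  | zero => simp [delSeq]
  | succ j ih =>
    show delSeq 𝔽 Sk V j \ suppδ 𝔽 (delSeq 𝔽 Sk V j) (V j) = _
    rw [suppδ_of_subset 𝔽 (delSeq_subset 𝔽 Sk V j), ih]
    ext F
    simp only [Finset.mem_sdiff, Finset.mem_inter, Finset.mem_biUnion, Finset.mem_range]
    constructor
    · rintro ⟨⟨hF, hn⟩, hn2⟩
      refine ⟨hF, ?_⟩
      rintro ⟨i, hi, hmem⟩
      rcases Nat.lt_succ_iff_lt_or_eq.1 hi with hi' | rfl
      · exact hn ⟨i, hi', hmem⟩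
      · exact hn2 ⟨⟨hF, hn⟩, hmem⟩
    · rintro ⟨hF, hn⟩
      have hn' : ¬∃ i, i < j ∧ F ∈ suppδ 𝔽 Sk (V i) :=
        fun ⟨i, hi, hm⟩ => hn ⟨i, Nat.lt_succ_of_lt hi, hm⟩
      exact ⟨⟨hF, hn'⟩, fun ⟨_, hm⟩ => hn ⟨j, Nat.lt_succ_self j, hm⟩⟩

lemma Cstar_eq (Sk : Finset (Finset (Fin n))) (V : ℕ → Finset (Fin n)) (j : ℕ) :
    Cstar 𝔽 Sk V j = suppδ 𝔽 (delSeq 𝔽 Sk V j) (V j) := by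
  rw [suppδ_of_subset 𝔽 (delSeq_subset 𝔽 Sk V j), delSeq_eq]
  ext F
  simp only [Cstar, Finset.mem_sdiff, Finset.mem_inter, mem_suppδ_iff]
  tauto

variable (n k)

lemma simRank_mono {X Y : Finset (Finset (Fin n))} (h : X ⊆ Y) :
    simRank 𝔽 n k X ≤ simRank 𝔽 n k Y :=
  Submodule.finrank_mono (Submodule.span_mono (Set.image_mono (Finset.coe_subset.2 h)))

lemma simRank_span_insert (F : Finset (Fin n)) (X : Finset (Finset (Fin n))) :
    (Submodule.span 𝔽 ((fun G => bvec 𝔽 n k G) '' ((insert F X : Finset (Finset (Fin n))) : Set (Finset (Fin n)))))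
      = (𝔽 ∙ bvec 𝔽 n k F) ⊔ Submodule.span 𝔽 ((fun G => bvec 𝔽 n k G) '' (X : Set (Finset (Fin n)))) := by
  rw [Finset.coe_insert, Set.image_insert_eq, Submodule.span_insert]

lemma simRank_insert_le (F : Finset (Fin n)) (X : Finset (Finset (Fin n))) :
    simRank 𝔽 n k (insert F X) ≤ simRank 𝔽 n k X + 1 := by
  unfold simRank
  rw [simRank_span_insert]
  refine le_trans (Submodule.finrank_add_le_finrank_add_finrank _ _) ?_
  rw [add_comm]
  gcongr
  by_cases h : bvec 𝔽 n k F = 0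
  · rw [h, Submodule.span_zero_singleton]
    simp
  · exact le_of_eq (finrank_span_singleton h)

lemma simRank_insert_eq_self {F : Finset (Fin n)} {X : Finset (Finset (Fin n))}
    (h : bvec 𝔽 n k F ∈ Submodule.span 𝔽 ((fun G => bvec 𝔽 n k G) '' (X : Set (Finset (Fin n))))) :
    simRank 𝔽 n k (insert F X) = simRank 𝔽 n k X := by
  unfold simRank
  rw [Finset.coe_insert, Set.image_insert_eq, Submodule.span_insert_eq_span h]

lemma simRank_insert_eq {F : Finset (Fin n)} {X : Finset (Finset (Fin n))}
    (h : bvec 𝔽 n k F ∉ Submodule.span 𝔽 ((fun G => bvec 𝔽 n k G) '' (X : Set (Finset (Fin n))))) :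
    simRank 𝔽 n k (insert F X) = simRank 𝔽 n k X + 1 := by
  refine le_antisymm (simRank_insert_le 𝔽 n k F X) ?_
  have hlt : Submodule.span 𝔽 ((fun G => bvec 𝔽 n k G) '' (X : Set (Finset (Fin n))))
      < Submodule.span 𝔽 ((fun G => bvec 𝔽 n k G) '' ((insert F X : Finset (Finset (Fin n))) : Set (Finset (Fin n)))) := by
    refine lt_of_le_of_ne (Submodule.span_mono (Set.image_mono (by simp))) ?_
    intro heq
    apply h
    rw [heq]
    exact Submodule.subset_span ⟨F, by simp, rfl⟩
  have := Submodule.finrank_lt_finrank_of_lt hlt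
  unfold simRank
  omega

lemma simRank_eq_zero_imp {X : Finset (Finset (Fin n))} (h : simRank 𝔽 n k X = 0)
    (hne : ∀ F ∈ X, bvec 𝔽 n k F ≠ (0 : Csets n (k-1) → 𝔽)) : X = ∅ := by
  have hbot : Submodule.span 𝔽 ((fun G => bvec 𝔽 n k G) '' (X : Set (Finset (Fin n)))) = ⊥ :=
    Submodule.finrank_eq_zero.1 h
  rw [Finset.eq_empty_iff_forall_notMem]
  intro F hF
  apply hne F hF
  have : bvec 𝔽 n k F ∈ Submodule.span 𝔽 ((fun G => bvec 𝔽 n k G) '' (X : Set (Finset (Fin n)))) :=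
    Submodule.subset_span ⟨F, by simpa using hF, rfl⟩
  rw [hbot] at this
  simpa using this

lemma bvec_ne_zero (hk : 2 ≤ k) {F : Finset (Fin n)} (hF : F.card = k) :
    bvec 𝔽 n k F ≠ (0 : Csets n (k-1) → 𝔽) := by
  have hne : F.Nonempty := Finset.card_pos.1 (by omega)
  set i := F.min' hne with hi
  have hiF : i ∈ F := F.min'_mem hne
  have hcard : (F.erase i).card = k - 1 := by
    rw [Finset.card_erase_of_mem hiF, hF]
  intro h0
  have h1 : bvec 𝔽 n k F ⟨F.erase i, hcard⟩ = 0 := by rw [h0]; rfl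
  have h2 : inc (F.erase i) F = (-1 : ℤ) ^ (F.filter (fun j => j ≤ i)).card := by
    unfold inc
    rw [Finset.sum_eq_single_of_mem i hiF]
    · rw [if_pos rfl]
    · intro x hx hxi
      rw [if_neg]
      intro heq
      have : i ∈ F.erase x := Finset.mem_erase.2 ⟨fun h => hxi h.symm, hiF⟩
      rw [← heq] at this
      exact (Finset.mem_erase.1 this).1 rfl
  rw [show bvec 𝔽 n k F ⟨F.erase i, hcard⟩ = ((inc (F.erase i) F : ℤ) : 𝔽) from rfl, h2] at h1
  push_cast at h1
  exact (pow_ne_zero _ (neg_ne_zero.2 one_ne_zero)) h1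

lemma sdiff_erase_eq_insert {Δ C : Finset (Finset (Fin n))} {F : Finset (Fin n)}
    (hC : C ⊆ Δ) (hF : F ∈ C) : Δ \ C.erase F = insert F (Δ \ C) := by
  ext G
  simp only [Finset.mem_sdiff, Finset.mem_erase, Finset.mem_insert, not_and]
  by_cases hG : G = F
  · subst hG
    simp [hC hF]
  · constructor
    · rintro ⟨h1, h2⟩
      exact Or.inr ⟨h1, fun hmem => hG (by tauto)⟩
    · rintro (h | ⟨h1, h2⟩)
      · exact absurd h hG
      · exact ⟨h1, fun _ => (h2 ·)⟩

lemma cocirc_nonempty {Δ C : Finset (Finset (Fin n))} (h : SimCocircuit 𝔽 n k Δ C) :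
    C.Nonempty := by
  rcases Finset.eq_empty_or_nonempty C with rfl | hne
  · exfalso
    have := h.2.1
    simp at this
  · exact hne

lemma cocirc_to_hyp {Δ C : Finset (Finset (Fin n))} (h : SimCocircuit 𝔽 n k Δ C) :
    SimHyperplane 𝔽 n k Δ (Δ \ C) := by
  obtain ⟨hCsub, hlt, hmin⟩ := h
  have hflat : SimFlat 𝔽 n k Δ (Δ \ C) := by
    refine ⟨Finset.sdiff_subset, ?_⟩
    intro F hFΔ hmem
    by_contra hFnot
    have hFC : F ∈ C := by
      by_contra hFC
      exact hFnot (Finset.mem_sdiff.2 ⟨hFΔ, hFC⟩)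
    have hss : C.erase F ⊂ C := Finset.erase_ssubset hFC
    have heq := hmin _ hss
    rw [sdiff_erase_eq_insert n hCsub hFC] at heq
    rw [simRank_insert_eq_self 𝔽 n k hmem] at heq
    omega
  refine ⟨hflat, ?_⟩
  obtain ⟨F, hF⟩ := cocirc_nonempty 𝔽 n k ⟨hCsub, hlt, hmin⟩
  have hss : C.erase F ⊂ C := Finset.erase_ssubset hF
  have heq := hmin _ hss
  rw [sdiff_erase_eq_insert n hCsub hF] at heq
  have hle := simRank_insert_le 𝔽 n k F (Δ \ C)
  omega

lemma hyp_to_cocirc {Δ C : Finset (Finset (Fin n))} (hC : C ⊆ Δ)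
    (h : SimHyperplane 𝔽 n k Δ (Δ \ C)) : SimCocircuit 𝔽 n k Δ C := by
  obtain ⟨⟨hHsub, hflat⟩, hrank⟩ := h
  refine ⟨hC, by omega, ?_⟩
  intro C' hC'
  obtain ⟨F, hFC, hFC'⟩ := Finset.exists_of_ssubset hC'
  have hFΔ : F ∈ Δ := hC hFC
  have hFH : F ∉ Δ \ C := fun h => (Finset.mem_sdiff.1 h).2 hFC
  have hFspan : bvec 𝔽 n k F ∉
      Submodule.span 𝔽 ((fun G => bvec 𝔽 n k G) '' ((Δ \ C : Finset (Finset (Fin n))) : Set (Finset (Fin n)))) :=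
    fun hmem => hFH (hflat F hFΔ hmem)
  have h1 : simRank 𝔽 n k (insert F (Δ \ C)) = simRank 𝔽 n k (Δ \ C) + 1 :=
    simRank_insert_eq 𝔽 n k hFspan
  have hsub : insert F (Δ \ C) ⊆ Δ \ C' := by
    intro G hG
    rcases Finset.mem_insert.1 hG with rfl | hG'
    · exact Finset.mem_sdiff.2 ⟨hFΔ, hFC'⟩
    · rcases Finset.mem_sdiff.1 hG' with ⟨h1, h2⟩
      exact Finset.mem_sdiff.2 ⟨h1, fun h => h2 (hC'.subset h)⟩
  have h2 := simRank_mono 𝔽 n k hsub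
  have h3 := simRank_mono 𝔽 n k (Finset.sdiff_subset (s := Δ) (t := C'))
  omega

lemma simFlat_trans {Sk Y X : Finset (Finset (Fin n))} (hY : SimFlat 𝔽 n k Sk Y)
    (hX : SimFlat 𝔽 n k Y X) : SimFlat 𝔽 n k Sk X := by
  refine ⟨hX.1.trans hY.1, ?_⟩
  intro F hF hmem
  have hFY : F ∈ Y := hY.2 F hF
    (Submodule.span_mono (Set.image_mono (Finset.coe_subset.2 hX.1)) hmem)
  exact hX.2 F hFY hmem

lemma simFlat_self (Sk : Finset (Finset (Fin n))) : SimFlat 𝔽 n k Sk Sk :=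
  ⟨le_refl _, fun F hF _ => hF⟩

end StmtAux

theorem stmt10 (𝔽 : Type*) [Field 𝔽] (n k : ℕ) (hk : 2 ≤ k) (hkn : k ≤ n)
    (Sk : Finset (Finset (Fin n))) (hSk : ∀ F ∈ Sk, F.card = k) :
    DPerfect 𝔽 n k Sk ↔ Superdense 𝔽 n k Sk := by
  constructor
  · rintro ⟨V, ⟨-, hcard, hcocirc⟩, hsimp⟩
    set r := simRank 𝔽 n k Sk with hr
    have hco' : ∀ j < r, SimCocircuit 𝔽 n k (delSeq 𝔽 Sk V j)
        (suppδ 𝔽 (delSeq 𝔽 Sk V j) (V j)) := by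
      intro j hj
      rw [← Cstar_eq]
      exact hcocirc j hj
    have hstep : ∀ j, delSeq 𝔽 Sk V (j+1)
        = delSeq 𝔽 Sk V j \ suppδ 𝔽 (delSeq 𝔽 Sk V j) (V j) := fun j => rfl
    have hhyp : ∀ j < r, SimHyperplane 𝔽 n k (delSeq 𝔽 Sk V j) (delSeq 𝔽 Sk V (j+1)) := by
      intro j hj
      rw [hstep j]
      exact cocirc_to_hyp 𝔽 n k (hco' j hj)
    have hssub : ∀ j < r, delSeq 𝔽 Sk V (j+1) ⊂ delSeq 𝔽 Sk V j := by
      intro j hj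
      rw [hstep j]
      exact Finset.sdiff_ssubset (suppδ_subset 𝔽) (cocirc_nonempty 𝔽 n k (hco' j hj))
    have hrank : ∀ j, j ≤ r → simRank 𝔽 n k (delSeq 𝔽 Sk V j) = r - j := by
      intro j
      induction j with
      | zero =>
        intro _
        show simRank 𝔽 n k Sk = r - 0
        omega
      | succ j ih =>
        intro h
        have hj : j < r := h
        have h1 := (hhyp j hj).2
        have h2 := ih (le_of_lt hj)
        omega
    have hempty : delSeq 𝔽 Sk V r = ∅ := by
      apply simRank_eq_zero_imp 𝔽 n k
      · rw [hrank r le_rfl]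
        omega
      · intro F hF
        exact bvec_ne_zero 𝔽 n k hk (hSk F (delSeq_subset 𝔽 Sk V r hF))
    have hflatSk : ∀ j, j ≤ r → SimFlat 𝔽 n k Sk (delSeq 𝔽 Sk V j) := by
      intro j
      induction j with
      | zero =>
        intro _
        exact simFlat_self 𝔽 n k Sk
      | succ j ih =>
        intro h
        have hj : j < r := h
        exact simFlat_trans 𝔽 n k (ih hj.le) (hhyp j hj).1
    refine ⟨fun i => delSeq 𝔽 Sk V (r - i), by simpa using hempty, by simp [hr, delSeq], ?_, ?_, ?_⟩
    · intro i _
      exact hflatSk (r - i) (Nat.sub_le _ _)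
    · intro i hi
      show delSeq 𝔽 Sk V (r - i) ⊂ delSeq 𝔽 Sk V (r - (i+1))
      have e : r - i = (r - (i+1)) + 1 := by omega
      rw [e]
      exact hssub (r - (i+1)) (by omega)
    · intro i hi
      have hj : r - (i+1) < r := by omega
      have e : r - i = (r - (i+1)) + 1 := by omega
      show DenseHyp 𝔽 n k (delSeq 𝔽 Sk V (r - (i+1))) (delSeq 𝔽 Sk V (r - i))
      rw [e]
      exact ⟨hhyp _ hj, V (r - (i+1)), hcard _ hj, hsimp _ hj, hstep _⟩
  · rintro ⟨X, hX0, hXr, hflat, hchain, hdense⟩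
    classical
    set r := simRank 𝔽 n k Sk with hr
    have hW : ∀ i, i < r → ∃ V : Finset (Fin n), V.card = k - 1 ∧
        SimplicialFace k (X (i+1)) V ∧ X i = X (i+1) \ suppδ 𝔽 (X (i+1)) V :=
      fun i hi => (hdense i hi).2
    choose W hWcard hWsimp hWeq using hW
    set V : ℕ → Finset (Fin n) := fun j => if h : j < r then W (r-1-j) (by omega) else ∅ with hV
    have hVj : ∀ j, ∀ hj : j < r, V j = W (r-1-j) (by omega) := by
      intro j hj
      simp only [hV]
      rw [dif_pos hj]
    have hΔX : ∀ j, j ≤ r → delSeq 𝔽 Sk V j = X (r - j) := by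
      intro j
      induction j with
      | zero =>
        intro _
        show Sk = X (r - 0)
        rw [Nat.sub_zero, hXr]
      | succ j ih =>
        intro h
        have hj : j < r := h
        have hi : r - 1 - j < r := by omega
        show delSeq 𝔽 Sk V j \ suppδ 𝔽 (delSeq 𝔽 Sk V j) (V j) = X (r - (j+1))
        rw [ih hj.le, hVj j hj, show r - j = (r-1-j)+1 from by omega,
          show r - (j+1) = r-1-j from by omega]
        exact (hWeq (r-1-j) hi).symm
    refine ⟨V, ⟨rfl, ?_, ?_⟩, ?_⟩
    · intro j hj
      rw [hVj j hj]
      exact hWcard _ _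
    · intro j hj
      rw [Cstar_eq, hΔX j hj.le, hVj j hj, show r - j = (r-1-j)+1 from by omega]
      have hi : r - 1 - j < r := by omega
      apply hyp_to_cocirc 𝔽 n k (suppδ_subset 𝔽)
      rw [← hWeq (r-1-j) hi]
      exact (hdense (r-1-j) hi).1
    · intro j hj
      rw [hΔX j hj.le, hVj j hj, show r - j = (r-1-j)+1 from by omega]
      exact hWsimp _ _
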